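/- Covariant stability of the exact scatteringless dispersion relation along purely imaginary wavenumbers: let λ > 0 and r ∈ (0,1). Define S(r) = √( ((1−λ)/2)² + λ·artanh(r)/r ), Γ(r) = −(1+λ)/2 + S(r), and χ(r) = r·( (1−λ)/2 + S(r) ) = r(1+Γ(r)). Then Γ(r) ≥ 0 and χ(r) − Γ(r) ≥ 0; that is, the covariant-stability discriminant |Im(kτ)| − Im(ωτ) = |χ| − Γ is nonnegative. -/

import Mathlib

/-!
Statement 10: covariant stability of the exact scatteringless dispersion relation
along purely imaginary wavenumbers: for `λ > 0`, `r ∈ (0,1)`, with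
`S(r) = √(((1−λ)/2)² + λ·artanh(r)/r)`, `Γ(r) = −(1+λ)/2 + S(r)`,
`χ(r) = r((1−λ)/2 + S(r)) = r(1+Γ(r))`, one has `Γ(r) ≥ 0` and `χ(r) − Γ(r) ≥ 0`.
-/

noncomputable section
open Real

/-- The inverse hyperbolic tangent, `artanh x = (1/2) log((1+x)/(1−x))`. -/
def artanh (x : ℝ) : ℝ := (1 / 2) * Real.log ((1 + x) / (1 - x))

private lemma aux_exp_ineq : ∀ x : ℝ, 0 ≤ x → (1 - x) * Real.exp (2 * x) ≤ 1 + x := by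
  have hderiv : ∀ x : ℝ, HasDerivAt (fun x : ℝ => 1 + x - (1 - x) * Real.exp (2 * x))
      (1 - (1 - 2 * x) * Real.exp (2 * x)) x := by
    intro x
    have h1 : HasDerivAt (fun x : ℝ => 1 + x) 1 x := by
      simpa using (hasDerivAt_id x).const_add 1
    have h2 : HasDerivAt (fun x : ℝ => 1 - x) (-1) x := by
      simpa using (hasDerivAt_id x).const_sub 1
    have h3 : HasDerivAt (fun x : ℝ => Real.exp (2 * x)) (Real.exp (2 * x) * 2) x := by
      simpa using ((hasDerivAt_id x).const_mul 2).exp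
    have : HasDerivAt (fun x : ℝ => 1 + x - (1 - x) * Real.exp (2 * x)) _ x := h1.sub (h2.mul h3)
    convert this using 1
    ring
  have hmono : MonotoneOn (fun x : ℝ => 1 + x - (1 - x) * Real.exp (2 * x)) (Set.Ici 0) := by
    apply monotoneOn_of_deriv_nonneg (convex_Ici 0)
    · exact Continuous.continuousOn (by continuity)
    · intro x _
      exact (hderiv x).differentiableAt.differentiableWithinAt
    · intro x _
      rw [(hderiv x).deriv]
      have h := Real.add_one_le_exp (-(2 * x))
      have hx : (0:ℝ) < Real.exp (2 * x) := Real.exp_pos _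
      have : (1 - 2 * x) * Real.exp (2 * x) ≤ Real.exp (-(2 * x)) * Real.exp (2 * x) := by
        apply mul_le_mul_of_nonneg_right _ hx.le
        linarith
      rw [← Real.exp_add, neg_add_cancel, Real.exp_zero] at this
      linarith
  intro x hx
  have h0 : (fun x : ℝ => 1 + x - (1 - x) * Real.exp (2 * x)) 0 ≤
      (fun x : ℝ => 1 + x - (1 - x) * Real.exp (2 * x)) x :=
    hmono (Set.self_mem_Ici) hx hx
  norm_num at h0
  linarith

private lemma artanh_lower {r : ℝ} (h0 : 0 < r) (h1 : r < 1) : r ≤ _root_.artanh r := by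
  have key : Real.exp (2 * r) ≤ (1 + r) / (1 - r) := by
    rw [le_div_iff₀ (by linarith)]
    have := aux_exp_ineq r h0.le
    linarith
  have := Real.log_le_log (Real.exp_pos _) key
  rw [Real.log_exp] at this
  unfold _root_.artanh
  linarith

private lemma artanh_upper {r : ℝ} (h0 : 0 < r) (h1 : r < 1) : _root_.artanh r ≤ r / (1 - r) := by
  have hr1 : (0:ℝ) < 1 - r := by linarith
  have hpos : (0:ℝ) < (1 + r) / (1 - r) := by positivity
  have hlog := Real.log_le_sub_one_of_pos hpos
  have h : (1 + r) / (1 - r) - 1 = 2 * (r / (1 - r)) := by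
    field_simp
    ring
  rw [h] at hlog
  unfold _root_.artanh
  linarith

theorem scatteringless_imaginary_axis_stability
    (lam : ℝ) (hlam : 0 < lam) (r : ℝ) (hr : r ∈ Set.Ioo (0 : ℝ) 1) :
    0 ≤ -(1 + lam) / 2 + Real.sqrt (((1 - lam) / 2) ^ 2 + lam * _root_.artanh r / r) ∧
    0 ≤ r * ((1 - lam) / 2 + Real.sqrt (((1 - lam) / 2) ^ 2 + lam * _root_.artanh r / r)) -
        (-(1 + lam) / 2 + Real.sqrt (((1 - lam) / 2) ^ 2 + lam * _root_.artanh r / r)) := by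
  obtain ⟨hr0, hr1⟩ := hr
  have hr1' : (0:ℝ) < 1 - r := by linarith
  set u : ℝ := r / (1 - r) with hu_def
  have hu : u * (1 - r) = r := div_mul_cancel₀ _ (ne_of_gt hr1')
  have hu0 : 0 ≤ u := div_nonneg hr0.le hr1'.le
  set A : ℝ := ((1 - lam) / 2) ^ 2 + lam * _root_.artanh r / r with hA
  set S : ℝ := Real.sqrt A with hS
  have hlow : r ≤ _root_.artanh r := artanh_lower hr0 hr1
  have hup : _root_.artanh r ≤ u := artanh_upper hr0 hr1
  have hart0 : 0 ≤ _root_.artanh r := le_trans hr0.le hlow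
  have hA0 : 0 ≤ A := by
    have h' : 0 ≤ lam * _root_.artanh r / r := by positivity
    rw [hA]
    nlinarith [sq_nonneg ((1 - lam) / 2)]
  -- lower bound on S
  have hSlb : (1 + lam) / 2 ≤ S := by
    rw [hS, show ((1 + lam) / 2) = Real.sqrt (((1 + lam) / 2) ^ 2) from
      (Real.sqrt_sq (by linarith)).symm]
    apply Real.sqrt_le_sqrt
    have h1 : lam ≤ lam * _root_.artanh r / r := by
      rw [le_div_iff₀ hr0]
      nlinarith
    nlinarith
  have hΓ : 0 ≤ -(1 + lam) / 2 + S := by linarith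
  refine ⟨hΓ, ?_⟩
  -- upper bound on S
  have hSub : S ≤ (1 + lam) / 2 + u := by
    rw [hS, show (1 + lam) / 2 + u = Real.sqrt (((1 + lam) / 2 + u) ^ 2) from
      (Real.sqrt_sq (by linarith)).symm]
    apply Real.sqrt_le_sqrt
    have h1 : lam * _root_.artanh r / r ≤ lam * (1 + u) := by
      rw [div_le_iff₀ hr0]
      have h2 : lam * _root_.artanh r ≤ lam * u := mul_le_mul_of_nonneg_left hup hlam.le
      nlinarith
    nlinarith
  -- conclude
  have hmul : (1 - r) * S ≤ (1 - r) * ((1 + lam) / 2 + u) :=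
    mul_le_mul_of_nonneg_left hSub hr1'.le
  have heq : (1 - r) * ((1 + lam) / 2 + u) = (1 - r) * ((1 + lam) / 2) + r := by
    nlinarith [hu]
  nlinarith [hmul, heq, hSlb]
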